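/- Let G be a locally compact Hausdorff topological group and let Γ be a discrete subgroup of G which is cocompact, i.e. there exists a compact set C ⊆ G with Γ·C = G. Then for every γ ∈ Γ, the subgroup Γ ∩ Z(γ) is cocompact in the centralizer Z(γ): there exists a compact set K ⊆ Z(γ) such that every element z of Z(γ) can be written z = δ·k with δ ∈ Γ ∩ Z(γ) and k ∈ K. -/

import Mathlib

open Pointwise

/-- Let `G` be a locally compact Hausdorff topological group and `Γ` a discrete subgroup of `G`
which is cocompact.  Then for every `γ ∈ Γ`, the subgroup `Γ ∩ Z(γ)` is cocompact in the
centralizer `Z(γ)`. -/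
theorem cocompact_inter_centralizer
    {G : Type*} [Group G] [TopologicalSpace G] [IsTopologicalGroup G]
    [LocallyCompactSpace G] [T2Space G]
    (Γ : Subgroup G) (hdisc : DiscreteTopology Γ)
    (hcocompact : ∃ C : Set G, IsCompact C ∧ (Γ : Set G) * C = Set.univ)
    (γ : G) (hγ : γ ∈ Γ) :
    ∃ K : Set G, K ⊆ (Subgroup.centralizer {γ} : Set G) ∧ IsCompact K ∧
      ∀ z ∈ Subgroup.centralizer {γ},
        ∃ δ ∈ Γ ⊓ Subgroup.centralizer {γ}, ∃ k ∈ K, z = δ * k := by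
  classical
  obtain ⟨C, hC, hΓC⟩ := hcocompact
  -- the set of conjugates of γ by elements of C, intersected with Γ, is finite
  have hΓclosed : IsClosed (Γ : Set G) := Subgroup.isClosed_of_discrete
  set V : Set G := (Γ : Set G) ∩ ((C * {γ}) * C⁻¹) with hV
  have hVcompact : IsCompact V := by
    apply IsCompact.inter_left _ hΓclosed
    exact (hC.mul isCompact_singleton).mul hC.inv
  have hVdisc : DiscreteTopology V := by
    have : V ⊆ (Γ : Set G) := Set.inter_subset_left
    exact DiscreteTopology.of_subset hdisc this
  have hVfin : V.Finite := hVcompact.finite (isDiscrete_iff_discreteTopology.mpr hVdisc)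
  -- choice of representatives
  let f : G → G := fun v =>
    if h : ∃ δ ∈ Γ, δ⁻¹ * γ * δ = v then h.choose else 1
  let D : Set G := f '' V
  have hDfin : D.Finite := hVfin.image f
  set Z : Set G := (Subgroup.centralizer {γ} : Set G) with hZ
  have hZclosed : IsClosed Z := by
    have : Z = {g : G | γ * g = g * γ} := by
      ext g
      simp [hZ, Subgroup.mem_centralizer_iff]
    rw [this]
    exact isClosed_eq (continuous_const.mul continuous_id) (continuous_id.mul continuous_const)
  refine ⟨Z ∩ (D * C), Set.inter_subset_left, ?_, ?_⟩
  · exact IsCompact.inter_left (hDfin.isCompact.mul hC) hZclosed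
  · intro z hz
    -- write z = δ * c
    have : z ∈ (Γ : Set G) * C := by rw [hΓC]; trivial
    obtain ⟨δ, hδ, c, hc, hzc⟩ := this
    have hzc' : δ * c = z := hzc
    -- z commutes with γ
    have hcomm : γ * z = z * γ := Subgroup.mem_centralizer_iff.mp hz γ rfl
    have h : γ * (δ * c) = δ * c * γ := by rw [hzc']; exact hcomm
    have h2 : δ⁻¹ * γ * δ * c = c * γ := by
      calc δ⁻¹ * γ * δ * c = δ⁻¹ * (γ * (δ * c)) := by group
        _ = δ⁻¹ * (δ * c * γ) := by rw [h]
        _ = c * γ := by group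
    have hkey : δ⁻¹ * γ * δ = c * γ * c⁻¹ := by
      rw [← h2]; group
    have hvV : δ⁻¹ * γ * δ ∈ V := by
      constructor
      · exact mul_mem (mul_mem (inv_mem hδ) hγ) hδ
      · rw [hkey]
        exact Set.mul_mem_mul (Set.mul_mem_mul hc rfl) (Set.inv_mem_inv.mpr hc)
    have hex : ∃ δ' ∈ Γ, δ'⁻¹ * γ * δ' = δ⁻¹ * γ * δ := ⟨δ, hδ, rfl⟩
    set δ₀ := f (δ⁻¹ * γ * δ) with hδ₀def
    have hδ₀ : δ₀ ∈ Γ ∧ δ₀⁻¹ * γ * δ₀ = δ⁻¹ * γ * δ := by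
      rw [hδ₀def]
      simp only [f, dif_pos hex]
      exact ⟨hex.choose_spec.1, hex.choose_spec.2⟩
    have hδ₀D : δ₀ ∈ D := ⟨_, hvV, rfl⟩
    -- δ * δ₀⁻¹ centralizes γ and lies in Γ
    have hdZ : δ * δ₀⁻¹ ∈ Subgroup.centralizer ({γ} : Set G) := by
      rw [Subgroup.mem_centralizer_iff]
      intro x hx
      rw [Set.mem_singleton_iff] at hx
      rw [hx]
      calc γ * (δ * δ₀⁻¹) = δ * (δ⁻¹ * γ * δ) * δ₀⁻¹ := by group
        _ = δ * (δ₀⁻¹ * γ * δ₀) * δ₀⁻¹ := by rw [hδ₀.2]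
        _ = δ * δ₀⁻¹ * γ := by group
    refine ⟨δ * δ₀⁻¹, Subgroup.mem_inf.mpr ⟨mul_mem hδ (inv_mem hδ₀.1), hdZ⟩,
      δ₀ * c, ⟨?_, ?_⟩, by rw [← hzc']; group⟩
    · -- δ₀ * c ∈ Z
      have heq : δ₀ * c = (δ * δ₀⁻¹)⁻¹ * z := by rw [← hzc']; group
      rw [hZ, heq]
      exact mul_mem (inv_mem hdZ) hz
    · exact Set.mul_mem_mul hδ₀D hc
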